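/- Let n ≥ 3, let a_1,…,a_n > 0, let A_n be the diagonal matrix with diagonal entries a_1,…,a_n, and let C_n be the periodic chain matrix. Write det(A_nC_n − λ I_n) = Σ_{j=0}^{n} p_j(A_n) (−λ)^{j} with p_n = 1. Then the coefficient of (−λ)^{n−1} is p_{n−1}(A_n) = 2 Σ_{i=1}^n a_i, and the coefficient of (−λ)^{n−2} is p_{n−2}(A_n) = Σ_{1 ≤ i < j ≤ n} c_{i,j} a_i a_j, where c_{i,j} = 3 if i − j ≡ ±1 (mod n) and c_{i,j} = 4 otherwise. -/

import Mathlib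

open Matrix Polynomial

/-- The periodic chain matrix `C_n`: `2` on the diagonal, `-1` at positions
`(i, i+1)` and `(i, i-1)` with indices modulo `n`, and `0` elsewhere. -/
def pchain (n : ℕ) [NeZero n] : Matrix (Fin n) (Fin n) ℝ :=
  Matrix.of fun i j => if i = j then 2 else if j = i + 1 ∨ i = j + 1 then -1 else 0


section Aux

lemma pair_inj' {n : ℕ} {a b c d : Fin n} (hab : a < b) (hcd : c < d)
    (h : ({a, b} : Finset (Fin n)) = {c, d}) : a = c ∧ b = d := by
  have ha : a = c ∨ a = d := by
    have : a ∈ ({c, d} : Finset (Fin n)) := h ▸ by simp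
    simpa using this
  have hb : b = c ∨ b = d := by
    have : b ∈ ({c, d} : Finset (Fin n)) := h ▸ by simp
    simpa using this
  rcases ha with rfl | rfl
  · rcases hb with rfl | rfl
    · exact absurd hab (lt_irrefl _)
    · exact ⟨rfl, rfl⟩
  · rcases hb with rfl | rfl
    · exact absurd (hab.trans hcd) (lt_irrefl _)
    · exact absurd hab (lt_irrefl _)

lemma sum_ppc_two {n : ℕ} (f : Fin n → ℝ) :
    ∑ t ∈ Finset.powersetCard 2 (Finset.univ : Finset (Fin n)), ∏ i ∈ t, f i
      = ∑ i : Fin n, ∑ j ∈ Finset.Ioi i, f i * f j := by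
  rw [Finset.sum_sigma']
  refine (Finset.sum_bij (fun p _ => ({p.1, p.2} : Finset (Fin n))) ?_ ?_ ?_ ?_).symm
  · rintro ⟨i, j⟩ hp
    simp only [Finset.mem_sigma, Finset.mem_Ioi] at hp
    simp [Finset.mem_powersetCard_univ, Finset.card_pair hp.2.ne]
  · rintro ⟨i, j⟩ hp ⟨k, l⟩ hq h
    simp only [Finset.mem_sigma, Finset.mem_Ioi] at hp hq
    obtain ⟨h1, h2⟩ := pair_inj' hp.2 hq.2 h
    subst h1; subst h2; rfl
  · intro t ht
    rw [Finset.mem_powersetCard_univ] at ht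
    obtain ⟨x, y, hxy, rfl⟩ := Finset.card_eq_two.mp ht
    rcases hxy.lt_or_gt with h | h
    · exact ⟨⟨x, y⟩, by simpa using h, rfl⟩
    · exact ⟨⟨y, x⟩, by simpa using h, Finset.pair_comm y x⟩
  · rintro ⟨i, j⟩ hp
    simp only [Finset.mem_sigma, Finset.mem_Ioi] at hp
    rw [Finset.prod_pair hp.2.ne]

lemma swap_term {n : ℕ} (M : Matrix (Fin n) (Fin n) ℝ) {i j : Fin n}
    (hij : i ≠ j) :
    ((Equiv.Perm.sign (Equiv.swap i j)) •
        ∏ k, charmatrix M (Equiv.swap i j k) k).coeff (n - 2) = -(M i j * M j i) := by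
  have hjmem : j ∈ Finset.univ.erase i := by simp [hij.symm]
  rw [← Finset.mul_prod_erase Finset.univ _ (Finset.mem_univ i),
    ← Finset.mul_prod_erase _ _ hjmem]
  have hrest : ∏ k ∈ (Finset.univ.erase i).erase j, charmatrix M (Equiv.swap i j k) k
      = ∏ k ∈ (Finset.univ.erase i).erase j, (X - C (M k k)) := by
    refine Finset.prod_congr rfl fun k hk => ?_
    simp only [Finset.mem_erase] at hk
    rw [Equiv.swap_apply_of_ne_of_ne hk.2.1 hk.1, charmatrix_apply_eq]
  rw [hrest, Equiv.swap_apply_left, Equiv.swap_apply_right,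
    charmatrix_apply_ne _ _ _ hij.symm, charmatrix_apply_ne _ _ _ hij]
  set P := ∏ k ∈ (Finset.univ.erase i).erase j, (X - C (M k k)) with hPdef
  have hP : P.Monic := monic_prod_of_monic _ _ fun k _ => monic_X_sub_C _
  have hdeg : P.natDegree = n - 2 := by
    rw [hPdef, Polynomial.natDegree_prod _ _ fun k _ => (monic_X_sub_C _).ne_zero]
    simp [natDegree_X_sub_C, Finset.card_erase_of_mem hjmem,
      Finset.card_erase_of_mem (Finset.mem_univ i)]
    omega
  have hcomb : (-C (M j i)) * ((-C (M i j)) * P) = C (M j i * M i j) * P := by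
    rw [_root_.map_mul]; ring
  rw [hcomb, Equiv.Perm.sign_swap hij, Polynomial.coeff_smul, Polynomial.coeff_C_mul,
    ← hdeg, hP.coeff_natDegree]
  simp [mul_comm]

lemma charpoly_coeff_sub_two {n : ℕ} (hn : 3 ≤ n) (M : Matrix (Fin n) (Fin n) ℝ) :
    M.charpoly.coeff (n - 2) =
      ∑ i : Fin n, ∑ j ∈ Finset.Ioi i, (M i i * M j j - M i j * M j i) := by
  classical
  have hcard : Fintype.card (Fin n) = n := Fintype.card_fin n
  rw [Matrix.charpoly, Matrix.det_apply, Polynomial.finset_sum_coeff]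
  have key : ∀ σ : Equiv.Perm (Fin n), σ ≠ 1 → ¬ σ.IsSwap →
      (∏ i, charmatrix M (σ i) i).coeff (n - 2) = 0 := by
    intro σ h1 h2
    have hc3 : 3 ≤ σ.support.card := by
      have e1 : ¬ σ.support.card ≤ 1 := fun h => h1 (Equiv.Perm.card_support_le_one.mp h)
      have e2 : σ.support.card ≠ 2 := fun h => h2 (Equiv.Perm.card_support_eq_two.mp h)
      omega
    apply Polynomial.coeff_eq_zero_of_natDegree_lt
    calc (∏ i, charmatrix M (σ i) i).natDegree
        ≤ ∑ i, (charmatrix M (σ i) i).natDegree := Polynomial.natDegree_prod_le _ _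
      _ ≤ ∑ i : Fin n, (if σ i = i then 1 else 0) := by
          refine Finset.sum_le_sum fun i _ => ?_
          by_cases h : σ i = i
          · simp [h, charmatrix_apply_eq, Polynomial.natDegree_X_sub_C]
          · simp [charmatrix_apply_ne _ _ _ h, h]
      _ = (Finset.univ.filter fun i => σ i = i).card := by
          simp [Finset.sum_ite_eq, Finset.sum_boole]
      _ < n - 2 := by
          have := Finset.card_filter_add_card_filter_not
            (s := (Finset.univ : Finset (Fin n))) (p := fun i => σ i = i)
          have hsupp : (Finset.univ.filter fun i => ¬ σ i = i).card = σ.support.card := rfl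
          rw [hsupp] at this
          simp only [Finset.card_univ, hcard] at this
          omega
  rw [← Finset.sum_filter_add_sum_filter_not Finset.univ (fun σ => σ = 1 ∨ σ.IsSwap)]
  have h2 : ∑ σ ∈ Finset.univ.filter (fun σ : Equiv.Perm (Fin n) => ¬(σ = 1 ∨ σ.IsSwap)),
      (Equiv.Perm.sign σ • ∏ i, charmatrix M (σ i) i).coeff (n - 2) = 0 := by
    refine Finset.sum_eq_zero fun σ hσ => ?_
    simp only [Finset.mem_filter, not_or] at hσ
    rw [Polynomial.coeff_smul, key σ hσ.2.1 hσ.2.2, smul_zero]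
  rw [h2, add_zero]
  have hone : ¬ (1 : Equiv.Perm (Fin n)).IsSwap := by
    rintro ⟨x, y, hxy, h⟩
    have hx : (1 : Equiv.Perm (Fin n)) x = Equiv.swap x y x := congrArg (fun σ => σ x) h
    simp at hx
    exact hxy hx
  have hfil : (Finset.univ.filter fun σ : Equiv.Perm (Fin n) => σ = 1 ∨ σ.IsSwap)
      = insert 1 (Finset.univ.filter Equiv.Perm.IsSwap) := by
    ext σ
    simp [or_comm]
  rw [hfil, Finset.sum_insert (by simp [hone])]
  have hid : ((Equiv.Perm.sign (1 : Equiv.Perm (Fin n))) •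
      ∏ i, charmatrix M ((1 : Equiv.Perm (Fin n)) i) i).coeff (n - 2)
      = ∑ i : Fin n, ∑ j ∈ Finset.Ioi i, M i i * M j j := by
    simp only [Equiv.Perm.one_apply, _root_.map_one, one_smul, charmatrix_apply_eq]
    simp_rw [sub_eq_add_neg, ← map_neg C]
    rw [Finset.prod_X_add_C_coeff _ _ (by simp)]
    have h2' : (Finset.univ : Finset (Fin n)).card - (n - 2) = 2 := by simp; omega
    rw [h2', ← sum_ppc_two]
    refine Finset.sum_congr rfl fun t ht => ?_
    rw [Finset.mem_powersetCard_univ] at ht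
    have hneg : ∏ i ∈ t, -M i i = (∏ _i ∈ t, (-1 : ℝ)) * ∏ i ∈ t, M i i := by
      rw [← Finset.prod_mul_distrib]; simp
    rw [hneg, Finset.prod_const, ht]
    norm_num
  have hswap : ∑ σ ∈ Finset.univ.filter Equiv.Perm.IsSwap,
      ((Equiv.Perm.sign σ) • ∏ i, charmatrix M (σ i) i).coeff (n - 2)
      = ∑ i : Fin n, ∑ j ∈ Finset.Ioi i, -(M i j * M j i) := by
    rw [Finset.sum_sigma']
    refine (Finset.sum_bij (fun p _ => Equiv.swap p.1 p.2) ?_ ?_ ?_ ?_).symm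
    · rintro ⟨i, j⟩ hp
      simp only [Finset.mem_sigma, Finset.mem_Ioi] at hp
      simp only [Finset.mem_filter, Finset.mem_univ, true_and]
      exact ⟨i, j, hp.2.ne, rfl⟩
    · rintro ⟨i, j⟩ hp ⟨k, l⟩ hq h
      simp only [Finset.mem_sigma, Finset.mem_Ioi] at hp hq
      have hsup := congrArg Equiv.Perm.support h
      simp only [Equiv.Perm.support_swap hp.2.ne, Equiv.Perm.support_swap hq.2.ne] at hsup
      obtain ⟨h1', h2'⟩ := pair_inj' hp.2 hq.2 hsup
      subst h1'; subst h2'; rfl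
    · intro σ hσ
      simp only [Finset.mem_filter, Finset.mem_univ, true_and] at hσ
      obtain ⟨x, y, hxy, rfl⟩ := hσ
      rcases hxy.lt_or_gt with h | h
      · exact ⟨⟨x, y⟩, by simpa using h, rfl⟩
      · exact ⟨⟨y, x⟩, by simpa using h, Equiv.swap_comm y x⟩
    · rintro ⟨i, j⟩ hp
      simp only [Finset.mem_sigma, Finset.mem_Ioi] at hp
      exact (swap_term M hp.2.ne).symm
  rw [hid, hswap, ← Finset.sum_add_distrib]
  refine Finset.sum_congr rfl fun i _ => ?_
  rw [← Finset.sum_add_distrib]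
  refine Finset.sum_congr rfl fun j _ => ?_
  ring

end Aux

theorem stmt2 (n : ℕ) [NeZero n] (hn : 3 ≤ n) (a : Fin n → ℝ) (ha : ∀ i, 0 < a i) :
    ∃ p : ℕ → ℝ, p n = 1 ∧
      (∀ lam : ℝ,
        (Matrix.diagonal a * pchain n - lam • (1 : Matrix (Fin n) (Fin n) ℝ)).det =
          ∑ j ∈ Finset.range (n + 1), p j * (-lam) ^ j) ∧
      p (n - 1) = 2 * ∑ i, a i ∧
      p (n - 2) = ∑ i : Fin n, ∑ j ∈ Finset.Ioi i,
        (if j = i + 1 ∨ i = j + 1 then (3 : ℝ) else 4) * a i * a j := by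
  have hcard : Fintype.card (Fin n) = n := Fintype.card_fin n
  set M : Matrix (Fin n) (Fin n) ℝ := Matrix.diagonal a * pchain n with hM
  have hdeg : M.charpoly.natDegree = n := by
    rw [Matrix.charpoly_natDegree_eq_dim, hcard]
  have hMab : ∀ i j, M i j = a i * pchain n i j := fun i j => by
    rw [hM, Matrix.diagonal_mul]
  have hMdiag : ∀ i, M i i = 2 * a i := fun i => by
    rw [hMab]; simp [pchain]; ring
  refine ⟨fun j => (-1 : ℝ) ^ (n - j) * M.charpoly.coeff j, ?_, ?_, ?_, ?_⟩
  · simp only [Nat.sub_self, pow_zero, one_mul]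
    have hmc := (Matrix.charpoly_monic M).coeff_natDegree
    rw [hdeg] at hmc
    exact hmc
  · intro lam
    have heval : M.charpoly.eval lam = (lam • (1 : Matrix (Fin n) (Fin n) ℝ) - M).det := by
      rw [Matrix.charpoly, ← Polynomial.coe_evalRingHom, RingHom.map_det]
      congr 1
      ext i j
      by_cases h : i = j
      · subst h
        simp [charmatrix_apply_eq, Matrix.sub_apply]
      · simp [charmatrix_apply_ne _ _ _ h, Matrix.one_apply, h, Matrix.sub_apply]
    have hneg : M - lam • (1 : Matrix (Fin n) (Fin n) ℝ)
        = -(lam • (1 : Matrix (Fin n) (Fin n) ℝ) - M) := (neg_sub _ _).symm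
    simp only []
    rw [hneg, Matrix.det_neg, hcard, ← heval,
      Polynomial.eval_eq_sum_range, hdeg, Finset.mul_sum]
    refine Finset.sum_congr rfl fun j hj => ?_
    have hj' : j ≤ n := Nat.lt_succ_iff.mp (Finset.mem_range.mp hj)
    rw [neg_pow lam j]
    rw [show (-1 : ℝ) ^ (n - j) * M.charpoly.coeff j * ((-1) ^ j * lam ^ j)
        = ((-1 : ℝ) ^ (n - j) * (-1) ^ j) * (M.charpoly.coeff j * lam ^ j) by ring,
      ← pow_add, Nat.sub_add_cancel hj']
  · simp only []
    have h1 : n - (n - 1) = 1 := by omega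
    rw [h1, pow_one]
    have := Matrix.trace_eq_neg_charpoly_coeff M
    rw [hcard] at this
    rw [show (-1 : ℝ) * M.charpoly.coeff (n - 1) = -(M.charpoly.coeff (n-1)) by ring,
      ← this]
    rw [Matrix.trace]
    simp only [Matrix.diag_apply, hMdiag]
    rw [Finset.mul_sum]
  · simp only []
    have h2 : n - (n - 2) = 2 := by omega
    rw [h2, charpoly_coeff_sub_two hn M, show ((-1 : ℝ)) ^ 2 = 1 by norm_num, one_mul]
    refine Finset.sum_congr rfl fun i _ => Finset.sum_congr rfl fun j hj => ?_
    have hij : i ≠ j := (Finset.mem_Ioi.mp hj).ne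
    rw [hMdiag, hMdiag, hMab, hMab]
    by_cases hadj : j = i + 1 ∨ i = j + 1
    · have hadj' : i = j + 1 ∨ j = i + 1 := hadj.symm
      simp only [pchain, Matrix.of_apply, if_neg hij, if_neg hij.symm, if_pos hadj,
        if_pos hadj']
      ring
    · have hadj' : ¬(i = j + 1 ∨ j = i + 1) := fun h => hadj h.symm
      simp only [pchain, Matrix.of_apply, if_neg hij, if_neg hij.symm, if_neg hadj,
        if_neg hadj']
      ring
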